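/- As d → ∞, the infinite-time Matérn radial distribution function converges uniformly on [1,∞) to the unit step function: sup_{r≥1} |g₂(r;∞) − 1| ≤ α₂(1;1)/(2 − α₂(1;1)) → 0, and the convergence is exponentially fast since α₂(1;1) ≤ (3/4)^{d/2} · C for a constant C. -/

import Mathlib

open Real Filter

/-- Scaled intersection volume of two unit balls in `ℝ^d` at center distance `r`:
`α₂(r;1) = c(d) ∫₀^{arccos(r/2)} sin^d θ dθ` for `r ≤ 2` and `0` for `r ≥ 2`, with
`c(d) = 2Γ(1+d/2)/(√π Γ((d+1)/2))`. -/
noncomputable def alphaUnit (d : ℕ) (r : ℝ) : ℝ :=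
  if r ≤ 2 then
    (2 * Real.Gamma (1 + d / 2) / (Real.sqrt π * Real.Gamma ((d + 1) / 2))) *
      ∫ θ in (0 : ℝ)..Real.arccos (r / 2), Real.sin θ ^ d
  else 0

/-- Infinite-time Matérn radial distribution function on `[1,∞)`:
`g₂(r;∞) = 2/(2 - α₂(r;1))`. -/
noncomputable def maternG2 (d : ℕ) (r : ℝ) : ℝ := 2 / (2 - alphaUnit d r)

/-- `∫₀^{π/2} sin^d = √π Γ((d+1)/2) / (2 Γ(1+d/2))`. -/
theorem sinPowGamma (d : ℕ) : (∫ x in (0:ℝ)..(π/2), sin x ^ d)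
    = Real.sqrt π * Real.Gamma ((d + 1) / 2) / (2 * Real.Gamma (1 + d / 2)) := by
  induction d using Nat.strong_induction_on with
  | _ d ih =>
    match d with
    | 0 =>
        simp only [pow_zero, intervalIntegral.integral_const, smul_eq_mul, mul_one,
          Nat.cast_zero, zero_add, zero_div, add_zero, Real.Gamma_one, Real.Gamma_one_half_eq]
        rw [Real.mul_self_sqrt Real.pi_pos.le]
        ring
    | 1 =>
        have h32 : Real.Gamma (1 + (1:ℕ) / 2 : ℝ) = (1/2) * Real.sqrt π := by
          push_cast
          rw [show (1 + 1/2 : ℝ) = 1/2 + 1 by ring, Real.Gamma_add_one (by norm_num),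
            Real.Gamma_one_half_eq]
        simp only [pow_one, integral_sin, Real.cos_zero, Real.cos_pi_div_two, h32]
        push_cast
        rw [show ((1:ℝ)+1)/2 = 1 by ring, Real.Gamma_one]
        have : Real.sqrt π ≠ 0 := by positivity
        field_simp
        norm_num
    | (n+2) =>
        have key := integral_sin_pow n (a := 0) (b := π/2)
        simp only [Real.sin_zero, Real.cos_pi_div_two, zero_pow (Nat.succ_ne_zero n),
          mul_zero, zero_mul, sub_zero, zero_sub, zero_div, neg_zero, zero_add] at key
        rw [key, ih n (by omega)]
        have h1 : Real.Gamma (((n:ℝ)+2+1)/2) = (((n:ℝ)+1)/2) * Real.Gamma (((n:ℝ)+1)/2) := by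
          rw [show ((n:ℝ)+2+1)/2 = ((n:ℝ)+1)/2 + 1 by ring, Real.Gamma_add_one (by positivity)]
        have h2 : Real.Gamma (1 + ((n:ℝ)+2)/2) = (1 + (n:ℝ)/2) * Real.Gamma (1 + (n:ℝ)/2) := by
          rw [show 1 + ((n:ℝ)+2)/2 = (1 + (n:ℝ)/2) + 1 by ring,
            Real.Gamma_add_one (by positivity)]
        push_cast
        rw [h1, h2]
        have g1 : Real.Gamma (((n:ℝ)+1)/2) ≠ 0 := (Real.Gamma_pos_of_pos (by positivity)).ne'
        have g2 : Real.Gamma (1 + (n:ℝ)/2) ≠ 0 := (Real.Gamma_pos_of_pos (by positivity)).ne'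
        field_simp
        ring

lemma cFactor_pos (d : ℕ) :
    0 < 2 * Real.Gamma (1 + (d:ℝ) / 2) / (Real.sqrt π * Real.Gamma (((d:ℝ) + 1) / 2)) := by
  have g1 : 0 < Real.Gamma (1 + (d:ℝ)/2) := Real.Gamma_pos_of_pos (by positivity)
  have g2 : 0 < Real.Gamma (((d:ℝ)+1)/2) := Real.Gamma_pos_of_pos (by positivity)
  have : (0:ℝ) < Real.sqrt π := Real.sqrt_pos.mpr Real.pi_pos
  positivity

lemma alphaUnit_nonneg (d : ℕ) (r : ℝ) : 0 ≤ alphaUnit d r := by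
  unfold alphaUnit
  split
  · refine mul_nonneg (cFactor_pos d).le ?_
    refine intervalIntegral.integral_nonneg (Real.arccos_nonneg _) fun x hx => ?_
    exact pow_nonneg (Real.sin_nonneg_of_nonneg_of_le_pi hx.1
      (hx.2.trans (Real.arccos_le_pi _))) _
  · exact le_rfl

lemma alphaUnit_mono (d : ℕ) (r : ℝ) (hr : 1 ≤ r) : alphaUnit d r ≤ alphaUnit d 1 := by
  by_cases h2 : r ≤ 2
  · unfold alphaUnit
    rw [if_pos h2, if_pos (by norm_num)]
    refine mul_le_mul_of_nonneg_left ?_ (cFactor_pos d).le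
    have harc : Real.arccos (r/2) ≤ Real.arccos (1/2) := by
      simp only [Real.arccos]
      exact sub_le_sub_left (Real.monotone_arcsin (by linarith)) _
    refine intervalIntegral.integral_mono_interval le_rfl (Real.arccos_nonneg _) harc ?_
      ((continuous_sin.pow d).intervalIntegrable _ _)
    filter_upwards [MeasureTheory.ae_restrict_mem measurableSet_Ioc] with x hx
    exact pow_nonneg (Real.sin_nonneg_of_nonneg_of_le_pi hx.1.le
      (hx.2.trans (Real.arccos_le_pi _))) _
  · calc alphaUnit d r = 0 := by unfold alphaUnit; rw [if_neg h2]
    _ ≤ alphaUnit d 1 := alphaUnit_nonneg d 1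

lemma sqrt34_lt_one : Real.sqrt (3/4) < 1 := by
  rw [show (1:ℝ) = Real.sqrt 1 by simp]
  exact Real.sqrt_lt_sqrt (by norm_num) (by norm_num)

lemma alphaUnit_one_le (d : ℕ) : alphaUnit d 1 ≤ Real.sqrt (3/4) ^ d := by
  have harc : Real.arccos ((1:ℝ)/2) = π/3 := by
    rw [← Real.cos_pi_div_three]
    exact Real.arccos_cos (by positivity) (by linarith [Real.pi_pos])
  have hs : Real.sqrt (3/4) = Real.sqrt 3 / 2 := by
    rw [show (3/4:ℝ) = (Real.sqrt 3 / 2)^2 by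
      rw [div_pow, Real.sq_sqrt (by norm_num : (0:ℝ) ≤ 3)]; norm_num]
    exact Real.sqrt_sq (by positivity)
  -- pointwise bound: sin θ ≤ √(3/4) * sin (θ + π/6) on [0, π/3]
  have hpt : ∀ θ ∈ Set.Icc (0:ℝ) (π/3), sin θ ^ d ≤ (Real.sqrt (3/4) * sin (θ + π/6)) ^ d := by
    intro θ hθ
    have hθπ : θ ≤ π/3 := hθ.2
    have hθ0 : 0 ≤ θ := hθ.1
    have hpi := Real.pi_pos
    have hsin0 : 0 ≤ sin θ := Real.sin_nonneg_of_nonneg_of_le_pi hθ0 (by linarith)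
    refine pow_le_pow_left₀ hsin0 ?_ d
    rw [Real.sin_add, Real.cos_pi_div_six, Real.sin_pi_div_six, hs]
    have hcos : (1:ℝ)/2 ≤ Real.cos θ := by
      rw [← Real.cos_pi_div_three]
      exact Real.cos_le_cos_of_nonneg_of_le_pi hθ0 (by linarith) hθπ
    have hsin : sin θ ≤ Real.sqrt 3 / 2 := by
      rw [← Real.sin_pi_div_three]
      exact Real.sin_le_sin_of_le_of_le_pi_div_two (by linarith) (by linarith) hθπ
    have h3 : Real.sqrt 3 * Real.sqrt 3 = 3 := Real.mul_self_sqrt (by norm_num)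
    nlinarith [Real.sqrt_nonneg 3]
  -- integral bound
  have hint : (∫ θ in (0:ℝ)..(π/3), sin θ ^ d)
      ≤ Real.sqrt (3/4) ^ d * ∫ x in (0:ℝ)..(π/2), sin x ^ d := by
    have hpi := Real.pi_pos
    calc (∫ θ in (0:ℝ)..(π/3), sin θ ^ d)
        ≤ ∫ θ in (0:ℝ)..(π/3), (Real.sqrt (3/4) * sin (θ + π/6)) ^ d := by
          refine intervalIntegral.integral_mono_on (by positivity) ?_ ?_ hpt
          · exact (continuous_sin.pow d).intervalIntegrable _ _
          · exact Continuous.intervalIntegrable (by fun_prop) _ _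
      _ = Real.sqrt (3/4) ^ d * ∫ θ in (0:ℝ)..(π/3), sin (θ + π/6) ^ d := by
          simp_rw [mul_pow]
          exact intervalIntegral.integral_const_mul _ _
      _ = Real.sqrt (3/4) ^ d * ∫ x in (π/6)..(π/2), sin x ^ d := by
          rw [intervalIntegral.integral_comp_add_right (fun x => sin x ^ d) (π/6)]
          norm_num
          ring_nf
      _ ≤ Real.sqrt (3/4) ^ d * ∫ x in (0:ℝ)..(π/2), sin x ^ d := by
          refine mul_le_mul_of_nonneg_left ?_ (by positivity)
          refine intervalIntegral.integral_mono_interval (by positivity) (by linarith)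
            le_rfl ?_ ((continuous_sin.pow d).intervalIntegrable _ _)
          filter_upwards [MeasureTheory.ae_restrict_mem measurableSet_Ioc] with x hx
          exact pow_nonneg (Real.sin_nonneg_of_nonneg_of_le_pi hx.1.le
            (by linarith [hx.2])) _
  -- assemble
  unfold alphaUnit
  rw [if_pos (by norm_num), harc]
  have hC := cFactor_pos d
  calc (2 * Real.Gamma (1 + (d:ℝ)/2) / (Real.sqrt π * Real.Gamma (((d:ℝ)+1)/2))) *
        ∫ θ in (0:ℝ)..(π/3), sin θ ^ d
      ≤ (2 * Real.Gamma (1 + (d:ℝ)/2) / (Real.sqrt π * Real.Gamma (((d:ℝ)+1)/2))) *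
        (Real.sqrt (3/4) ^ d * ∫ x in (0:ℝ)..(π/2), sin x ^ d) :=
        mul_le_mul_of_nonneg_left hint hC.le
    _ = Real.sqrt (3/4) ^ d := by
        rw [sinPowGamma d]
        have g1 : Real.Gamma (1 + (d:ℝ)/2) ≠ 0 := (Real.Gamma_pos_of_pos (by positivity)).ne'
        have g2 : Real.Gamma (((d:ℝ)+1)/2) ≠ 0 := (Real.Gamma_pos_of_pos (by positivity)).ne'
        have hπ : Real.sqrt π ≠ 0 := by positivity
        field_simp

lemma rpow_eq_sqrt_pow (d : ℕ) : (3/4 : ℝ) ^ ((d:ℝ)/2) = Real.sqrt (3/4) ^ d := by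
  rw [Real.sqrt_eq_rpow, ← Real.rpow_natCast ((3/4:ℝ) ^ ((1:ℝ)/2)) d,
    ← Real.rpow_mul (by norm_num)]
  ring_nf

/-- As `d → ∞`, the infinite-time Matérn radial distribution function converges
uniformly on `[1,∞)` to the unit step: `sup_{r ≥ 1} |g₂(r;∞) − 1| ≤
α₂(1;1)/(2 − α₂(1;1)) → 0`, and the convergence is exponentially fast since
`α₂(1;1) ≤ C (3/4)^{d/2}` for some constant `C`. -/
theorem matern_g2_uniform_convergence :
    (∀ d : ℕ, 1 ≤ d → ∀ r : ℝ, 1 ≤ r →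
        |maternG2 d r - 1| ≤ alphaUnit d 1 / (2 - alphaUnit d 1)) ∧
      Tendsto (fun d : ℕ => alphaUnit d 1 / (2 - alphaUnit d 1)) atTop (nhds 0) ∧
      ∃ C : ℝ, ∀ d : ℕ, 1 ≤ d → alphaUnit d 1 ≤ (3 / 4 : ℝ) ^ ((d : ℝ) / 2) * C := by
  have hq : Real.sqrt (3/4) < 1 := sqrt34_lt_one
  have hq0 : 0 ≤ Real.sqrt (3/4) := Real.sqrt_nonneg _
  have ha1 : ∀ d : ℕ, alphaUnit d 1 ≤ 1 := fun d =>
    (alphaUnit_one_le d).trans (pow_le_one₀ hq0 hq.le)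
  refine ⟨?_, ?_, 1, fun d _ => by rw [mul_one, rpow_eq_sqrt_pow]; exact alphaUnit_one_le d⟩
  · intro d _ r hr
    have h0 : 0 ≤ alphaUnit d r := alphaUnit_nonneg d r
    have h0' : 0 ≤ alphaUnit d 1 := alphaUnit_nonneg d 1
    have hle : alphaUnit d r ≤ alphaUnit d 1 := alphaUnit_mono d r hr
    have h1 : alphaUnit d 1 ≤ 1 := ha1 d
    have h2a : (0:ℝ) < 2 - alphaUnit d r := by linarith
    have h2a1 : (0:ℝ) < 2 - alphaUnit d 1 := by linarith
    have heq : maternG2 d r - 1 = alphaUnit d r / (2 - alphaUnit d r) := by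
      unfold maternG2
      field_simp
      ring
    rw [heq, abs_of_nonneg (div_nonneg h0 h2a.le), div_le_div_iff₀ h2a h2a1]
    nlinarith
  · refine squeeze_zero (fun d => ?_) (fun d => ?_)
      (tendsto_pow_atTop_nhds_zero_of_lt_one hq0 hq)
    · have h0' : 0 ≤ alphaUnit d 1 := alphaUnit_nonneg d 1
      have h1 : alphaUnit d 1 ≤ 1 := ha1 d
      exact div_nonneg h0' (by linarith)
    · have h0' : 0 ≤ alphaUnit d 1 := alphaUnit_nonneg d 1
      have h1 : alphaUnit d 1 ≤ 1 := ha1 d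
      calc alphaUnit d 1 / (2 - alphaUnit d 1) ≤ alphaUnit d 1 := by
            rw [div_le_iff₀ (by linarith)]
            nlinarith
        _ ≤ Real.sqrt (3/4) ^ d := alphaUnit_one_le d
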